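/- Let n ≥ 2 and for i = 1,…,n define ψᵢ: ℝ³ → ℝ³ by ψᵢ(x,y,z) = ((x + 2i − 2)/(2n−1), y/(2n−1), z/(2n−1)). Then the attractor 𝒞ₙ of {ψ₁,…,ψₙ} is a compact, uniformly perfect, and uniformly disconnected subset of ℝ³. -/

import Mathlib

open Metric Set

/-- The contracting similarities `ψᵢ(x,y,z) = ((x + 2i - 2)/(2n-1), y/(2n-1), z/(2n-1))`,
`i = 1, …, n` (indexed here by `i : Fin n`, so `i = 0, …, n-1` gives the shift `2i`). -/
noncomputable def psi (n : ℕ) (i : Fin n) (x : EuclideanSpace ℝ (Fin 3)) :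
    EuclideanSpace ℝ (Fin 3) :=
  (2 * (n : ℝ) - 1)⁻¹ • (x + EuclideanSpace.single (0 : Fin 3) (2 * (i : ℕ) : ℝ))

/-- The set `X` is `c`-uniformly perfect: for every `x ∈ X` and every `r ∈ (0, diam X)`,
the set `B(x,r) \ B(x, r/c)` (taken within `X`) is nonempty. -/
def UniformlyPerfectOn {α : Type*} [PseudoMetricSpace α] (c : ℝ) (X : Set α) : Prop :=
  ∀ x ∈ X, ∀ r : ℝ, 0 < r → r < Metric.diam X →
    ∃ y ∈ X, dist y x < r ∧ r / c ≤ dist y x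

/-- The set `X` is `C`-uniformly disconnected: for every `x ∈ X` and every
`r ∈ (0, diam X)` there is `E ⊆ X` with `x ∈ E`, `diam E ≤ r` and `dist(E, X \ E) ≥ r / C`. -/
def UniformlyDisconnectedOn {α : Type*} [PseudoMetricSpace α] (C : ℝ) (X : Set α) : Prop :=
  ∀ x ∈ X, ∀ r : ℝ, 0 < r → r < Metric.diam X →
    ∃ E : Set α, E ⊆ X ∧ x ∈ E ∧ Metric.diam E ≤ r ∧
      ∀ a ∈ E, ∀ b ∈ X \ E, r / C ≤ dist a b

namespace PsiAux
noncomputable def rr (n : ℕ) : ℝ := (2 * (n : ℝ) - 1)⁻¹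
noncomputable def tw {n : ℕ} : List (Fin n) → ℝ
  | [] => 0
  | i :: w => rr n * (2 * (i : ℕ) + tw w)
noncomputable def Tw {n : ℕ} (w : List (Fin n)) (p : EuclideanSpace ℝ (Fin 3)) :
    EuclideanSpace ℝ (Fin 3) :=
  (rr n ^ w.length) • p + EuclideanSpace.single (0 : Fin 3) (tw w)
variable {n : ℕ}
lemma s_ge (hn : 2 ≤ n) : (3:ℝ) ≤ 2*(n:ℝ)-1 := by
  have : (2:ℝ) ≤ (n:ℝ) := by exact_mod_cast hn
  linarith
lemma rr_pos (hn : 2 ≤ n) : 0 < rr n := inv_pos.mpr (by have := s_ge hn; linarith)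
lemma rr_lt_one (hn : 2 ≤ n) : rr n < 1 := by
  have h := s_ge hn
  rw [rr]
  exact inv_lt_one_of_one_lt₀ (by linarith)
lemma rr_mul_s (hn : 2 ≤ n) : rr n * (2*(n:ℝ)-1) = 1 :=
  inv_mul_cancel₀ (by have := s_ge hn; linarith)
lemma Tw_apply (w : List (Fin n)) (p : EuclideanSpace ℝ (Fin 3)) (j : Fin 3) :
    Tw w p j = rr n ^ w.length * p j + if j = 0 then tw w else 0 := by
  simp [Tw, EuclideanSpace.single_apply]
lemma psi_apply (i : Fin n) (p : EuclideanSpace ℝ (Fin 3)) (j : Fin 3) :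
    psi n i p j = rr n * (p j + if j = 0 then (2*(i:ℕ):ℝ) else 0) := by
  simp [psi, rr, EuclideanSpace.single_apply]
  split_ifs <;> ring
lemma Tw_nil (p : EuclideanSpace ℝ (Fin 3)) : Tw ([] : List (Fin n)) p = p := by
  ext j
  simp [Tw_apply, tw]
lemma Tw_cons (i : Fin n) (w : List (Fin n)) (p : EuclideanSpace ℝ (Fin 3)) :
    Tw (i :: w) p = psi n i (Tw w p) := by
  ext j
  rw [Tw_apply, psi_apply, Tw_apply]
  simp only [List.length_cons, tw, pow_succ]
  split_ifs <;> ring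

-- cast helper
lemma one_le_abs_cast_sub {a b : ℕ} (h : a ≠ b) : (1:ℝ) ≤ |(a:ℝ) - (b:ℝ)| := by
  rcases Nat.lt_or_ge a b with hlt | hge
  · have h1 : (a:ℝ) + 1 ≤ b := by exact_mod_cast hlt
    rw [abs_sub_comm, abs_of_nonneg (by linarith)]
    linarith
  · have hlt : b < a := lt_of_le_of_ne hge (Ne.symm h)
    have h1 : (b:ℝ) + 1 ≤ a := by exact_mod_cast hlt
    rw [abs_of_nonneg (by linarith)]
    linarith

lemma fin_cast_le (hn : 2 ≤ n) (i : Fin n) : ((i:ℕ):ℝ) ≤ (n:ℝ) - 1 := by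
  have : ((i:ℕ):ℝ) + 1 ≤ (n:ℝ) := by exact_mod_cast Nat.succ_le_of_lt i.isLt
  linarith

section Inv
variable {Cn : Set (EuclideanSpace ℝ (Fin 3))}

lemma psi_mem (hCinv : Cn = ⋃ i, psi n i '' Cn) (i : Fin n) {q} (hq : q ∈ Cn) :
    psi n i q ∈ Cn := by
  rw [hCinv]
  exact mem_iUnion.mpr ⟨i, mem_image_of_mem _ hq⟩

lemma mem_step (hCinv : Cn = ⋃ i, psi n i '' Cn) {p} (hp : p ∈ Cn) :
    ∃ i : Fin n, ∃ q ∈ Cn, p = psi n i q := by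
  rw [hCinv] at hp
  obtain ⟨i, q, hq, h⟩ := mem_iUnion.mp hp
  exact ⟨i, q, hq, h.symm⟩

lemma Tw_mem (hCinv : Cn = ⋃ i, psi n i '' Cn) (w : List (Fin n)) :
    ∀ q ∈ Cn, Tw w q ∈ Cn := by
  induction w with
  | nil => intro q hq; rwa [Tw_nil]
  | cons i w ih =>
    intro q hq
    rw [Tw_cons]
    exact psi_mem hCinv i (ih q hq)

lemma exists_decomp (hCinv : Cn = ⋃ i, psi n i '' Cn) :
    ∀ k : ℕ, ∀ p ∈ Cn, ∃ w : List (Fin n), w.length = k ∧ ∃ q ∈ Cn, p = Tw w q := by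
  intro k
  induction k with
  | zero => intro p hp; exact ⟨[], rfl, p, hp, (Tw_nil p).symm⟩
  | succ k ih =>
    intro p hp
    obtain ⟨i, q, hq, rfl⟩ := mem_step hCinv hp
    obtain ⟨w, hw, q', hq', rfl⟩ := ih q hq
    exact ⟨i :: w, by simp [hw], q', hq', (Tw_cons i w q').symm⟩

lemma exists_decomp' (hCinv : Cn = ⋃ i, psi n i '' Cn) :
    ∀ k : ℕ, ∀ p ∈ Cn, ∃ u : List (Fin n), u.length = k ∧
      ∃ i : Fin n, ∃ q ∈ Cn, p = Tw (u ++ [i]) q := by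
  intro k
  induction k with
  | zero =>
    intro p hp
    obtain ⟨i, q, hq, rfl⟩ := mem_step hCinv hp
    refine ⟨[], rfl, i, q, hq, ?_⟩
    rw [List.nil_append, Tw_cons, Tw_nil]
  | succ k ih =>
    intro p hp
    obtain ⟨i, q, hq, rfl⟩ := mem_step hCinv hp
    obtain ⟨u, hu, i', q', hq', rfl⟩ := ih q hq
    exact ⟨i :: u, by simp [hu], i', q', hq', by rw [List.cons_append, Tw_cons]⟩




lemma coord_zero (hn : 2 ≤ n) (hCne : Cn.Nonempty) (hCcomp : IsCompact Cn)
    (hCinv : Cn = ⋃ i, psi n i '' Cn) (j : Fin 3) (hj : j ≠ 0) :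
    ∀ p ∈ Cn, p j = 0 := by
  have hc : ContinuousOn (fun p : EuclideanSpace ℝ (Fin 3) => |p j|) Cn :=
    ((EuclideanSpace.proj j).continuous.abs).continuousOn
  obtain ⟨z, hz, hmax⟩ := hCcomp.exists_isMaxOn hCne hc
  have hz0 : |z j| = 0 := by
    obtain ⟨i, q, hq, hzeq⟩ := mem_step hCinv hz
    have h1 : |z j| = rr n * |q j| := by
      rw [hzeq, psi_apply, if_neg hj, add_zero, abs_mul, abs_of_nonneg (rr_pos hn).le]
    have h2 : |q j| ≤ |z j| := hmax hq
    have h3 : |q j| = 0 := by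
      have hr := rr_lt_one hn
      have := abs_nonneg (q j)
      nlinarith
    rw [h1, h3, mul_zero]
  intro p hp
  exact abs_eq_zero.mp (le_antisymm (hz0 ▸ hmax hp) (abs_nonneg _))

lemma coord0_mem (hn : 2 ≤ n) (hCne : Cn.Nonempty) (hCcomp : IsCompact Cn)
    (hCinv : Cn = ⋃ i, psi n i '' Cn) :
    ∀ p ∈ Cn, 0 ≤ p 0 ∧ p 0 ≤ 1 := by
  have hc : ContinuousOn (fun p : EuclideanSpace ℝ (Fin 3) => p 0) Cn :=
    (EuclideanSpace.proj (0 : Fin 3)).continuous.continuousOn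
  have hrp := rr_pos hn
  have hrs := rr_mul_s hn
  obtain ⟨z, hz, hmax⟩ := hCcomp.exists_isMaxOn hCne hc
  obtain ⟨z', hz', hmin⟩ := hCcomp.exists_isMinOn hCne hc
  have hMle : z 0 ≤ 1 := by
    obtain ⟨i, q, hq, hzeq⟩ := mem_step hCinv hz
    have h1 : z 0 = rr n * (q 0 + 2*(i:ℕ)) := by rw [hzeq, psi_apply]; simp
    have h2 : q 0 ≤ z 0 := hmax hq
    have hi := fin_cast_le hn i
    have h3 : z 0 ≤ rr n * (z 0 + (2*(n:ℝ) - 2)) := by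
      rw [h1]
      exact mul_le_mul_of_nonneg_left (by linarith) hrp.le
    have h4 : rr n * (2*(n:ℝ)-2) = 1 - rr n := by linear_combination hrs
    nlinarith [rr_lt_one hn, mul_le_mul_of_nonneg_left (le_refl (z 0)) hrp.le]
  have hmge : 0 ≤ z' 0 := by
    obtain ⟨i, q, hq, hzeq⟩ := mem_step hCinv hz'
    have h1 : z' 0 = rr n * (q 0 + 2*(i:ℕ)) := by rw [hzeq, psi_apply]; simp
    have h2 : z' 0 ≤ q 0 := hmin hq
    have hi : (0:ℝ) ≤ 2*((i:ℕ):ℝ) := by positivity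
    have h3 : rr n * z' 0 ≤ z' 0 := by
      rw [h1]
      exact mul_le_mul_of_nonneg_left (by linarith) hrp.le
    nlinarith [rr_lt_one hn]
  exact fun p hp => ⟨le_trans hmge (hmin hp), le_trans (hmax hp) hMle⟩

lemma dist_eq0 {p q : EuclideanSpace ℝ (Fin 3)} (hp1 : p 1 = 0) (hp2 : p 2 = 0)
    (hq1 : q 1 = 0) (hq2 : q 2 = 0) : dist p q = |p 0 - q 0| := by
  have : dist p q = Real.sqrt ((p 0 - q 0)^2) := by
    rw [EuclideanSpace.dist_eq, Fin.sum_univ_three, hp1, hq1, hp2, hq2]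
    simp [Real.dist_eq, sq_abs]
  rw [this, Real.sqrt_sq_eq_abs]
end Inv

lemma tw_bounds (hn : 2 ≤ n) : ∀ w : List (Fin n), 0 ≤ tw w ∧ tw w ≤ 1 - rr n ^ w.length := by
  intro w
  induction w with
  | nil => simp [tw]
  | cons i u ih =>
    obtain ⟨h0, h1⟩ := ih
    have hr := rr_pos hn
    have hi : ((i:ℕ):ℝ) ≤ (n:ℝ) - 1 := fin_cast_le hn i
    have hi0 : (0:ℝ) ≤ ((i:ℕ):ℝ) := Nat.cast_nonneg _
    constructor
    · have h : (0:ℝ) ≤ 2*((i:ℕ):ℝ) + tw u := by linarith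
      simpa [tw] using mul_nonneg hr.le h
    · have key : 2*((i:ℕ):ℝ) + tw u ≤ (2*(n:ℝ)-1) - rr n ^ u.length := by linarith
      have : tw (i :: u) ≤ rr n * ((2*(n:ℝ)-1) - rr n ^ u.length) := by
        simpa [tw] using mul_le_mul_of_nonneg_left key hr.le
      calc tw (i :: u) ≤ rr n * ((2*(n:ℝ)-1) - rr n ^ u.length) := this
        _ = 1 - rr n ^ (i :: u).length := by
            rw [mul_sub, rr_mul_s hn, List.length_cons, pow_succ]
            ring

lemma tw_sep (hn : 2 ≤ n) : ∀ w w' : List (Fin n), w.length = w'.length → w ≠ w' →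
    2 * rr n ^ w.length ≤ |tw w - tw w'| := by
  intro w
  induction w with
  | nil =>
    intro w' hl hne
    cases w' with
    | nil => exact absurd rfl hne
    | cons i' u' => simp at hl
  | cons i u ih =>
    intro w' hl hne
    cases w' with
    | nil => simp at hl
    | cons i' u' =>
      have hl' : u.length = u'.length := by simpa using hl
      have hr := rr_pos hn
      by_cases hii : i = i'
      · subst hii
        have hne' : u ≠ u' := fun h => hne (by rw [h])
        have h := ih u' hl' hne'
        have hd : tw (i::u) - tw (i::u') = rr n * (tw u - tw u') := by
          simp only [tw]; ring
        rw [List.length_cons, hd, abs_mul, abs_of_nonneg hr.le, pow_succ]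
        calc 2 * (rr n ^ u.length * rr n) = rr n * (2 * rr n ^ u.length) := by ring
          _ ≤ rr n * |tw u - tw u'| := mul_le_mul_of_nonneg_left h hr.le
      · have hvv : (i:ℕ) ≠ (i':ℕ) := fun h => hii (Fin.ext h)
        have h1 : (1:ℝ) ≤ |((i:ℕ):ℝ) - ((i':ℕ):ℝ)| := one_le_abs_cast_sub hvv
        have h2 : (2:ℝ) ≤ |2*((i:ℕ):ℝ) - 2*((i':ℕ):ℝ)| := by
          rw [show 2*((i:ℕ):ℝ) - 2*((i':ℕ):ℝ) = 2*(((i:ℕ):ℝ) - ((i':ℕ):ℝ)) by ring,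
            abs_mul, abs_two]
          linarith
        have hbu := tw_bounds hn u
        have hbu' := tw_bounds hn u'
        rw [hl'] at hbu
        have htu : |tw u - tw u'| ≤ 1 - rr n ^ u'.length :=
          abs_le.mpr ⟨by linarith [hbu.1, hbu.2, hbu'.1, hbu'.2],
            by linarith [hbu.1, hbu.2, hbu'.1, hbu'.2]⟩
        rw [← hl'] at htu
        have hdiff : tw (i::u) - tw (i'::u') =
            rr n * ((2*((i:ℕ):ℝ) - 2*((i':ℕ):ℝ)) + (tw u - tw u')) := by
          simp only [tw]; ring
        rw [List.length_cons, hdiff, abs_mul, abs_of_nonneg hr.le]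
        have h3 : 2 - (1 - rr n ^ u.length) ≤
            |(2*((i:ℕ):ℝ) - 2*((i':ℕ):ℝ)) + (tw u - tw u')| := by
          have h4 := abs_sub_abs_le_abs_sub (2*((i:ℕ):ℝ) - 2*((i':ℕ):ℝ)) (-(tw u - tw u'))
          rw [abs_neg, sub_neg_eq_add] at h4
          linarith
        have hpow : rr n ^ u.length ≤ 1 := pow_le_one₀ hr.le (rr_lt_one hn).le
        calc 2 * rr n ^ (u.length + 1) ≤ rr n * (2 - (1 - rr n ^ u.length)) := by
              rw [pow_succ]
              nlinarith [mul_le_mul_of_nonneg_left hpow hr.le]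
          _ ≤ rr n * |(2*((i:ℕ):ℝ) - 2*((i':ℕ):ℝ)) + (tw u - tw u')| :=
              mul_le_mul_of_nonneg_left h3 hr.le

lemma tw_append : ∀ u v : List (Fin n), tw (u ++ v) = tw u + rr n ^ u.length * tw v := by
  intro u v
  induction u with
  | nil => simp [tw]
  | cons i u ih =>
    rw [List.cons_append]
    have h1 : tw (i :: (u ++ v)) = rr n * (2*(i:ℕ) + tw (u ++ v)) := by simp [tw]
    have h2 : tw (i :: u) = rr n * (2*(i:ℕ) + tw u) := by simp [tw]
    rw [h1, ih, h2, List.length_cons, pow_succ]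
    ring

end PsiAux


open PsiAux in
/-- For `n ≥ 2`, the attractor `𝒞ₙ` of `{ψ₁, …, ψₙ}` is a compact, uniformly perfect and
uniformly disconnected subset of `ℝ³`. -/
theorem psi_attractor_uniformly_perfect_and_disconnected
    (n : ℕ) (hn : 2 ≤ n)
    (Cn : Set (EuclideanSpace ℝ (Fin 3))) (hCne : Cn.Nonempty) (hCcomp : IsCompact Cn)
    (hCinv : Cn = ⋃ i, psi n i '' Cn) :
    IsCompact Cn ∧ (∃ c : ℝ, 1 < c ∧ UniformlyPerfectOn c Cn) ∧
      (∃ C : ℝ, 1 ≤ C ∧ UniformlyDisconnectedOn C Cn) := by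
  classical
  have hs := s_ge hn
  have hrp := rr_pos hn
  have hrl := rr_lt_one hn
  have hrs := rr_mul_s hn
  have h12 : ∀ p ∈ Cn, p 1 = 0 ∧ p 2 = 0 := fun p hp =>
    ⟨coord_zero hn hCne hCcomp hCinv 1 (by decide) p hp,
     coord_zero hn hCne hCcomp hCinv 2 (by decide) p hp⟩
  have h0 := coord0_mem hn hCne hCcomp hCinv
  have hdist : ∀ p ∈ Cn, ∀ q ∈ Cn, dist p q = |p 0 - q 0| := fun p hp q hq =>
    dist_eq0 (h12 p hp).1 (h12 p hp).2 (h12 q hq).1 (h12 q hq).2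
  have hdiam : Metric.diam Cn ≤ 1 := by
    apply diam_le_of_forall_dist_le zero_le_one
    intro p hp q hq
    rw [hdist p hp q hq]
    exact abs_le.mpr ⟨by linarith [(h0 p hp).1, (h0 q hq).2],
      by linarith [(h0 p hp).2, (h0 q hq).1]⟩
  refine ⟨hCcomp, ⟨(2*(n:ℝ)-1)^2, by nlinarith, ?_⟩, ⟨2*(n:ℝ)-1, by linarith, ?_⟩⟩
  · -- uniformly perfect
    intro x hx r hr0 hrd
    have hr1 : r < 1 := lt_of_lt_of_le hrd hdiam
    have hex : ∃ m : ℕ, rr n ^ m < r := exists_pow_lt_of_lt_one hr0 hrl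
    have hmspec := Nat.find_spec hex
    obtain ⟨m', hm'⟩ : ∃ m', Nat.find hex = m' + 1 := by
      refine ⟨Nat.find hex - 1, ?_⟩
      have hne0 : Nat.find hex ≠ 0 := by
        intro h
        rw [h, pow_zero] at hmspec
        linarith
      omega
    rw [hm'] at hmspec
    have hm2 : r ≤ rr n ^ m' := by
      by_contra h
      push_neg at h
      exact Nat.find_min hex (by omega) h
    obtain ⟨u, hu, i, q, hq, hxeq⟩ := exists_decomp' hCinv (m'+1) x hx
    have hn1 : 1 < n := hn
    set j : Fin n := if (i:ℕ) = 0 then ⟨1, hn1⟩ else ⟨0, by omega⟩ with hj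
    have hij : (j:ℕ) ≠ (i:ℕ) := by
      by_cases h : (i:ℕ) = 0
      · simp [hj, h]
      · simp only [hj, if_neg h]
        exact fun h' => h h'.symm
    have hyC : Tw (u ++ [j]) q ∈ Cn := Tw_mem hCinv _ q hq
    have hlen : ∀ l : Fin n, (u ++ [l]).length = m' + 2 := by
      intro l; simp [hu]
    have hco : ∀ l : Fin n, (Tw (u ++ [l]) q) 0
        = rr n ^ (m'+2) * q 0 + tw (u ++ [l]) := by
      intro l
      rw [Tw_apply, hlen l, if_pos rfl]
    have htww : ∀ l : Fin n, tw (u ++ [l]) = tw u + rr n ^ (m'+1) * (rr n * (2*((l:ℕ):ℝ))) := by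
      intro l
      rw [tw_append, hu]
      simp [tw]
    have hdyx : dist (Tw (u ++ [j]) q) x
        = rr n ^ (m'+1) * rr n * |2*((j:ℕ):ℝ) - 2*((i:ℕ):ℝ)| := by
      rw [hdist _ hyC x hx, hxeq, hco j, hco i, htww j, htww i]
      rw [show (rr n ^ (m'+2) * q 0 + (tw u + rr n ^ (m'+1) * (rr n * (2*((j:ℕ):ℝ))))) -
          (rr n ^ (m'+2) * q 0 + (tw u + rr n ^ (m'+1) * (rr n * (2*((i:ℕ):ℝ))))) =
          (rr n ^ (m'+1) * rr n) * (2*((j:ℕ):ℝ) - 2*((i:ℕ):ℝ)) by ring]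
      rw [abs_mul, abs_of_nonneg (by positivity)]
    have habs1 : (2:ℝ) ≤ |2*((j:ℕ):ℝ) - 2*((i:ℕ):ℝ)| := by
      have h1 := one_le_abs_cast_sub hij
      rw [show 2*((j:ℕ):ℝ) - 2*((i:ℕ):ℝ) = 2*(((j:ℕ):ℝ) - ((i:ℕ):ℝ)) by ring,
        abs_mul, abs_two]
      linarith
    have habs2 : |2*((j:ℕ):ℝ) - 2*((i:ℕ):ℝ)| ≤ 2*(n:ℝ) - 2 := by
      have hi1 := fin_cast_le hn i
      have hj1 := fin_cast_le hn j
      have hi0 : (0:ℝ) ≤ ((i:ℕ):ℝ) := Nat.cast_nonneg _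
      have hj0 : (0:ℝ) ≤ ((j:ℕ):ℝ) := Nat.cast_nonneg _
      exact abs_le.mpr ⟨by linarith, by linarith⟩
    refine ⟨Tw (u ++ [j]) q, hyC, ?_, ?_⟩
    · rw [hdyx]
      have hP : (0:ℝ) < rr n ^ (m'+1) := pow_pos hrp _
      have h5 : rr n * (2*(n:ℝ)-2) = 1 - rr n := by linear_combination hrs
      calc rr n ^ (m'+1) * rr n * |2*((j:ℕ):ℝ) - 2*((i:ℕ):ℝ)|
          ≤ rr n ^ (m'+1) * rr n * (2*(n:ℝ)-2) :=
            mul_le_mul_of_nonneg_left habs2 (by positivity)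
        _ = rr n ^ (m'+1) * (1 - rr n) := by rw [mul_assoc, h5]
        _ < rr n ^ (m'+1) * 1 := mul_lt_mul_of_pos_left (by linarith) hP
        _ < r := by rw [mul_one]; exact hmspec
    · rw [hdyx]
      have heq : r / (2*(n:ℝ)-1)^2 = r * rr n ^ 2 := by
        rw [rr, div_eq_mul_inv, inv_pow]
      rw [heq]
      calc r * rr n ^ 2 ≤ rr n ^ m' * rr n ^ 2 :=
            mul_le_mul_of_nonneg_right hm2 (by positivity)
        _ = rr n ^ (m'+1) * rr n * 1 := by ring
        _ ≤ rr n ^ (m'+1) * rr n * |2*((j:ℕ):ℝ) - 2*((i:ℕ):ℝ)| :=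
            mul_le_mul_of_nonneg_left (by linarith) (by positivity)
  · -- uniformly disconnected
    intro x hx r hr0 hrd
    have hr1 : r < 1 := lt_of_lt_of_le hrd hdiam
    have hex : ∃ m : ℕ, rr n ^ m ≤ r := by
      obtain ⟨m, hm⟩ := exists_pow_lt_of_lt_one hr0 hrl
      exact ⟨m, hm.le⟩
    have hmspec := Nat.find_spec hex
    obtain ⟨m', hm'⟩ : ∃ m', Nat.find hex = m' + 1 := by
      refine ⟨Nat.find hex - 1, ?_⟩
      have hne0 : Nat.find hex ≠ 0 := by
        intro h
        rw [h, pow_zero] at hmspec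
        linarith
      omega
    rw [hm'] at hmspec
    have hm2 : r < rr n ^ m' := by
      by_contra h
      push_neg at h
      exact Nat.find_min hex (by omega) h
    obtain ⟨w, hw, q, hq, hxeq⟩ := exists_decomp hCinv (m'+1) x hx
    refine ⟨Tw w '' Cn, ?_, ⟨q, hq, hxeq.symm⟩, ?_, ?_⟩
    · rintro _ ⟨a, ha, rfl⟩
      exact Tw_mem hCinv w a ha
    · apply diam_le_of_forall_dist_le hr0.le
      rintro _ ⟨a, ha, rfl⟩ _ ⟨b, hb, rfl⟩
      have haC := Tw_mem hCinv w a ha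
      have hbC := Tw_mem hCinv w b hb
      rw [hdist _ haC _ hbC, Tw_apply, Tw_apply, hw, if_pos rfl]
      have h6 : |a 0 - b 0| ≤ 1 := abs_le.mpr
        ⟨by linarith [(h0 a ha).1, (h0 b hb).2], by linarith [(h0 a ha).2, (h0 b hb).1]⟩
      calc |rr n ^ (m'+1) * a 0 + tw w - (rr n ^ (m'+1) * b 0 + tw w)|
          = rr n ^ (m'+1) * |a 0 - b 0| := by
            rw [show rr n ^ (m'+1) * a 0 + tw w - (rr n ^ (m'+1) * b 0 + tw w)
              = rr n ^ (m'+1) * (a 0 - b 0) by ring, abs_mul, abs_of_nonneg (by positivity)]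
        _ ≤ rr n ^ (m'+1) * 1 := mul_le_mul_of_nonneg_left h6 (by positivity)
        _ ≤ r := by rw [mul_one]; exact hmspec
    · rintro _ ⟨qa, hqa, rfl⟩ b ⟨hbC, hbE⟩
      obtain ⟨w', hw', qb, hqb, hbeq⟩ := exists_decomp hCinv (m'+1) b hbC
      have hww : w ≠ w' := by
        rintro rfl
        exact hbE ⟨qb, hqb, hbeq.symm⟩
      have hsep := tw_sep hn w w' (by rw [hw, hw']) hww
      rw [hw] at hsep
      have haC := Tw_mem hCinv w qa hqa
      have hA : (Tw w qa) 0 = rr n ^ (m'+1) * qa 0 + tw w := by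
        rw [Tw_apply, hw, if_pos rfl]
      have hB : b 0 = rr n ^ (m'+1) * qb 0 + tw w' := by
        rw [hbeq, Tw_apply, hw', if_pos rfl]
      have hqa0 := h0 qa hqa
      have hqb0 := h0 qb hqb
      have hP : (0:ℝ) < rr n ^ (m'+1) := pow_pos hrp _
      rw [hdist _ haC b hbC]
      have h7 : |(rr n ^ (m'+1) * qa 0) - (rr n ^ (m'+1) * qb 0)| ≤ rr n ^ (m'+1) := by
        rw [show (rr n ^ (m'+1) * qa 0) - (rr n ^ (m'+1) * qb 0)
          = rr n ^ (m'+1) * (qa 0 - qb 0) by ring, abs_mul, abs_of_nonneg hP.le]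
        have h6 : |qa 0 - qb 0| ≤ 1 := abs_le.mpr
          ⟨by linarith [hqa0.1, hqb0.2], by linarith [hqa0.2, hqb0.1]⟩
        nlinarith
      have h8 : rr n ^ (m'+1) ≤ |(Tw w qa) 0 - b 0| := by
        have hkey : tw w - tw w' = ((Tw w qa) 0 - b 0)
            - ((rr n ^ (m'+1) * qa 0) - (rr n ^ (m'+1) * qb 0)) := by
          rw [hA, hB]; ring
        have h9 : |tw w - tw w'| ≤ |(Tw w qa) 0 - b 0|
            + |(rr n ^ (m'+1) * qa 0) - (rr n ^ (m'+1) * qb 0)| := by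
          rw [hkey]
          exact abs_sub _ _
        linarith
      have h10 : r * rr n ≤ rr n ^ (m'+1) := by
        calc r * rr n ≤ rr n ^ m' * rr n := mul_le_mul_of_nonneg_right hm2.le hrp.le
          _ = rr n ^ (m'+1) := by rw [pow_succ]
      calc r / (2*(n:ℝ)-1) = r * rr n := by rw [div_eq_mul_inv, rr]
        _ ≤ rr n ^ (m'+1) := h10
        _ ≤ |(Tw w qa) 0 - b 0| := h8
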